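/- Let k ≥ 2 be an integer and let A be an n×n symmetric integer matrix with det A ≠ 0, all of whose entries are divisible by k. Suppose A is GL(ℤ)-congruent to a symmetric integer matrix B all of whose off-diagonal entries lie in {0,1} (i.e. B = PᵀAP for some integer matrix P with det P = ±1). Then B is a diagonal matrix, say with diagonal entries b₁, …, bₙ, and consequently the quotient group ℤⁿ/A·ℤⁿ is isomorphic to the direct sum of the cyclic groups ℤ/|bᵢ| via an isomorphism carrying the pairing which sends the classes of x, y ∈ ℤⁿ to xᵀA⁻¹y mod ℤ ∈ ℚ/ℤ to the orthogonal sum of the cyclic linking pairings (u,v) ↦ u·v/bᵢ mod ℤ on ℤ/|bᵢ|. -/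

import Mathlib

open Matrix

/-- Lemma 5.2: let `A` be a nondegenerate symmetric integer matrix all of whose entries are
divisible by `k ≥ 2`, and suppose `A` is `GL(ℤ)`-congruent to a symmetric matrix `B` with
off-diagonal entries in `{0,1}`.  Then `B` is diagonal, and the cokernel `ℤⁿ/A·ℤⁿ` with the
boundary linking pairing `(x,y) ↦ xᵀA⁻¹y mod ℤ` is isomorphic to the orthogonal sum of the
cyclic linking pairings `(u,v) ↦ u·v/bᵢ mod ℤ` on `ℤ/|bᵢ|`, where `bᵢ = B i i`. -/
theorem stmt_12 (k : ℕ) (hk : 2 ≤ k) (n : ℕ)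
    (A : Matrix (Fin n) (Fin n) ℤ) (hAsymm : A.IsSymm) (hAdet : A.det ≠ 0)
    (hdiv : ∀ i j, (k : ℤ) ∣ A i j)
    (B P : Matrix (Fin n) (Fin n) ℤ)
    (hP : P.det = 1 ∨ P.det = -1)
    (hBsymm : B.IsSymm)
    (hBoff : ∀ i j, i ≠ j → B i j = 0 ∨ B i j = 1)
    (hBA : B = Pᵀ * A * P) :
    (∀ i j, i ≠ j → B i j = 0) ∧
    ∃ φ : ((Fin n → ℤ) ⧸ LinearMap.range A.mulVecLin) ≃+ (∀ i, ZMod (B i i).natAbs),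
      ∀ x y : Fin n → ℤ, ∃ m : ℤ,
        dotProduct (fun i => (x i : ℚ))
            (((A.map (Int.cast : ℤ → ℚ))⁻¹).mulVec fun i => (y i : ℚ)) -
          ∑ i, ((φ (Submodule.Quotient.mk x) i).val : ℚ) *
              ((φ (Submodule.Quotient.mk y) i).val : ℚ) / (B i i : ℚ) = (m : ℚ) := by
  -- every entry of B is divisible by k
  have hBdvd : ∀ i j, (k : ℤ) ∣ B i j := by
    intro i j
    rw [hBA]
    simp only [Matrix.mul_apply]
    refine Finset.dvd_sum fun m _ => Dvd.dvd.mul_right (Finset.dvd_sum fun l _ => ?_) _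
    exact Dvd.dvd.mul_left (hdiv l m) _
  have hBdiag : ∀ i j, i ≠ j → B i j = 0 := by
    intro i j h
    rcases hBoff i j h with h0 | h1
    · exact h0
    · exfalso
      have h2 := hBdvd i j
      rw [h1] at h2
      have h3 := Int.le_of_dvd one_pos h2
      omega
  refine ⟨hBdiag, ?_⟩
  set d : Fin n → ℤ := fun i => B i i with hd
  have hB : B = Matrix.diagonal d := by
    ext i j
    by_cases h : i = j
    · subst h; simp [Matrix.diagonal, hd]
    · simp [Matrix.diagonal, h, hBdiag i j h]
  have hPdet : IsUnit P.det := by rcases hP with h | h <;> simp [h]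
  have hdet : B.det ≠ 0 := by
    rw [hBA, Matrix.det_mul, Matrix.det_mul, Matrix.det_transpose]
    rcases hP with h | h <;> simp [h, hAdet]
  have hdne : ∀ i, d i ≠ 0 := by
    intro i
    have hdd : B.det = ∏ i, d i := by rw [hB, Matrix.det_diagonal]
    rw [hdd] at hdet
    exact Finset.prod_ne_zero_iff.mp hdet i (Finset.mem_univ i)
  haveI : ∀ i, NeZero (B i i).natAbs := fun i => ⟨Int.natAbs_ne_zero.mpr (hdne i)⟩
  have hPtdet : IsUnit Pᵀ.det := by rwa [Matrix.det_transpose]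
  -- the linear equivalence given by Pᵀ
  let f : (Fin n → ℤ) ≃ₗ[ℤ] (Fin n → ℤ) :=
    LinearEquiv.ofLinear (Pᵀ.mulVecLin) ((Pᵀ)⁻¹.mulVecLin)
      (by rw [← Matrix.mulVecLin_mul, Matrix.mul_nonsing_inv _ hPtdet, Matrix.mulVecLin_one])
      (by rw [← Matrix.mulVecLin_mul, Matrix.nonsing_inv_mul _ hPtdet, Matrix.mulVecLin_one])
  have hPsurj : Function.Surjective P.mulVecLin := by
    intro v
    refine ⟨P⁻¹.mulVec v, ?_⟩
    rw [Matrix.mulVecLin_apply, Matrix.mulVec_mulVec, Matrix.mul_nonsing_inv _ hPdet,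
      Matrix.one_mulVec]
  have hmap : (LinearMap.range A.mulVecLin).map (f : (Fin n → ℤ) →ₗ[ℤ] (Fin n → ℤ))
      = LinearMap.range B.mulVecLin := by
    have hcomp : B.mulVecLin = (Pᵀ.mulVecLin).comp (A.mulVecLin.comp P.mulVecLin) := by
      rw [hBA, Matrix.mulVecLin_mul, Matrix.mulVecLin_mul, LinearMap.comp_assoc]
    rw [hcomp, LinearMap.range_comp, LinearMap.range_comp,
      LinearMap.range_eq_top.mpr hPsurj, Submodule.map_top]
    rfl
  let e1 := Submodule.Quotient.equiv (LinearMap.range A.mulVecLin)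
    (LinearMap.range B.mulVecLin) f hmap
  -- the reduction map
  let g : (Fin n → ℤ) →ₗ[ℤ] (∀ i, ZMod (B i i).natAbs) :=
    LinearMap.pi fun i =>
      ((Int.castAddHom (ZMod (B i i).natAbs)).toIntLinearMap).comp (LinearMap.proj i)
  have hker1 : LinearMap.range B.mulVecLin ≤ LinearMap.ker g := by
    rintro _ ⟨v, rfl⟩
    rw [LinearMap.mem_ker]
    have hmv : ∀ i, B.mulVec v i = d i * v i := by
      intro i; rw [hB, Matrix.mulVec_diagonal]
    funext i
    show ((B.mulVecLin v i : ℤ) : ZMod (B i i).natAbs) = 0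
    rw [Matrix.mulVecLin_apply, hmv, ZMod.intCast_zmod_eq_zero_iff_dvd]
    exact Int.natAbs_dvd.mpr (dvd_mul_right _ _)
  have hker2 : LinearMap.ker g ≤ LinearMap.range B.mulVecLin := by
    intro x hx
    rw [LinearMap.mem_ker] at hx
    have hdvd : ∀ i, d i ∣ x i := by
      intro i
      have h0 : ((x i : ℤ) : ZMod (B i i).natAbs) = 0 := congrFun hx i
      rw [ZMod.intCast_zmod_eq_zero_iff_dvd] at h0
      exact Int.natAbs_dvd.mp h0
    refine ⟨fun i => x i / d i, ?_⟩
    have hmv : ∀ i, B.mulVec (fun i => x i / d i) i = d i * (x i / d i) := by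
      intro i; rw [hB, Matrix.mulVec_diagonal]
    funext i
    rw [Matrix.mulVecLin_apply, hmv]
    exact Int.mul_ediv_cancel' (hdvd i)
  have hgsurj : Function.Surjective g := by
    intro t
    refine ⟨fun i => ((t i).val : ℤ), ?_⟩
    funext i
    show ((((t i).val : ℤ)) : ZMod (B i i).natAbs) = t i
    rw [Int.cast_natCast, ZMod.natCast_val, ZMod.cast_id]
  let gbar := Submodule.liftQ (LinearMap.range B.mulVecLin) g hker1
  have hinj : Function.Injective gbar := by
    rw [← LinearMap.ker_eq_bot]
    exact Submodule.ker_liftQ_eq_bot _ _ _ hker2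
  have hsurj : Function.Surjective gbar := by
    intro t
    obtain ⟨x, hx⟩ := hgsurj t
    exact ⟨Submodule.Quotient.mk x, hx⟩
  let e2 := LinearEquiv.ofBijective gbar ⟨hinj, hsurj⟩
  refine ⟨(e1.trans e2).toAddEquiv, ?_⟩
  have hφ : ∀ x : Fin n → ℤ, ∀ i,
      (e1.trans e2).toAddEquiv (Submodule.Quotient.mk x) i
        = (((Pᵀ.mulVec x) i : ℤ) : ZMod (B i i).natAbs) := by
    intro x i
    rfl
  intro x y
  -- rational matrices
  set cq : ℤ →+* ℚ := Int.castRingHom ℚ with hcq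
  have hc : ⇑cq = (Int.cast : ℤ → ℚ) := rfl
  have hPd : (P.map ⇑cq).det = ((P.det : ℤ) : ℚ) := (RingHom.map_det cq P).symm
  have hBd : (B.map ⇑cq).det = ((B.det : ℤ) : ℚ) := (RingHom.map_det cq B).symm
  have hdPq : ((P.map ⇑cq).det) ≠ 0 := by
    rw [hPd]; rcases hP with h | h <;> simp [h]
  have hdBq : ((B.map ⇑cq).det) ≠ 0 := by
    rw [hBd]; exact_mod_cast hdet
  have hBq : B.map ⇑cq = (P.map ⇑cq)ᵀ * A.map ⇑cq * P.map ⇑cq := by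
    rw [hBA, Matrix.map_mul, Matrix.map_mul, Matrix.transpose_map]
  have hAinv : (A.map ⇑cq)⁻¹ = P.map ⇑cq * (B.map ⇑cq)⁻¹ * (P.map ⇑cq)ᵀ := by
    apply Matrix.inv_eq_left_inv
    have h1 : (P.map ⇑cq)ᵀ * A.map ⇑cq = B.map ⇑cq * (P.map ⇑cq)⁻¹ := by
      rw [hBq, Matrix.mul_assoc, Matrix.mul_nonsing_inv _ (isUnit_iff_ne_zero.mpr hdPq),
        Matrix.mul_one]
    rw [Matrix.mul_assoc (P.map ⇑cq * (B.map ⇑cq)⁻¹), h1, ← Matrix.mul_assoc,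
      Matrix.mul_assoc (P.map ⇑cq), Matrix.nonsing_inv_mul _ (isUnit_iff_ne_zero.mpr hdBq),
      Matrix.mul_one, Matrix.mul_nonsing_inv _ (isUnit_iff_ne_zero.mpr hdPq)]
  have hBqd : (B.map ⇑cq)⁻¹ = Matrix.diagonal (fun i => ((B i i : ℚ))⁻¹) := by
    apply Matrix.inv_eq_left_inv
    rw [show B.map ⇑cq = Matrix.diagonal (fun m => ((d m : ℚ))) from by
      rw [hB, Matrix.diagonal_map (by simp)]; exact rfl, Matrix.diagonal_mul_diagonal]
    have h1 : (fun i => ((B i i : ℚ))⁻¹ * ((d i : ℚ))) = fun _ => (1 : ℚ) := by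
      funext i
      exact inv_mul_cancel₀ (by exact_mod_cast hdne i)
    rw [h1, Matrix.diagonal_one]
  -- reduce the pairing to a sum over the diagonal
  have hLHS : dotProduct (fun i => (x i : ℚ))
      (((A.map (Int.cast : ℤ → ℚ))⁻¹).mulVec fun i => (y i : ℚ))
      = ∑ i, ((Pᵀ.mulVec x i : ℚ) * (Pᵀ.mulVec y i : ℚ)) / (B i i : ℚ) := by
    rw [← hc, hAinv, ← Matrix.mulVec_mulVec, ← Matrix.mulVec_mulVec,
      Matrix.dotProduct_mulVec, ← Matrix.mulVec_transpose, hBqd]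
    simp only [dotProduct, Matrix.mulVec_diagonal]
    refine Finset.sum_congr rfl fun i _ => ?_
    rw [div_eq_mul_inv, RingHom.map_mulVec, RingHom.map_mulVec, Matrix.transpose_map]
    simp only [hc, Function.comp_def]
    ring
  have h1 : ∀ (u : Fin n → ℤ) i,
      (B i i) ∣ u i - (((u i : ZMod (B i i).natAbs)).val : ℤ) := by
    intro u i
    rw [ZMod.val_intCast]
    exact Int.natAbs_dvd.mp (Int.dvd_self_sub_of_emod_eq rfl)
  set u : Fin n → ℤ := Pᵀ.mulVec x with hu
  set v : Fin n → ℤ := Pᵀ.mulVec y with hv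
  have h2 : ∀ i, (B i i) ∣ u i * v i
      - (((u i : ZMod (B i i).natAbs)).val : ℤ) * (((v i : ZMod (B i i).natAbs)).val : ℤ) := by
    intro i
    have heq : u i * v i
        - (((u i : ZMod (B i i).natAbs)).val : ℤ) * (((v i : ZMod (B i i).natAbs)).val : ℤ)
        = (u i - (((u i : ZMod (B i i).natAbs)).val : ℤ)) * v i
          + (((u i : ZMod (B i i).natAbs)).val : ℤ)
            * (v i - (((v i : ZMod (B i i).natAbs)).val : ℤ)) := by ring
    rw [heq]
    exact dvd_add ((h1 u i).mul_right _) ((h1 v i).mul_left _)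
  refine ⟨∑ i, (u i * v i
      - (((u i : ZMod (B i i).natAbs)).val : ℤ) * (((v i : ZMod (B i i).natAbs)).val : ℤ))
        / (B i i), ?_⟩
  rw [hLHS]
  simp only [hφ]
  rw [Int.cast_sum, ← Finset.sum_sub_distrib]
  refine Finset.sum_congr rfl fun i _ => ?_
  rw [Int.cast_div_charZero (h2 i), div_sub_div_same]
  push_cast
  ring
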